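/- Let $(X,\check r)$ be an involutive non-degenerate solution of the braid equation coming from a left brace $B$ (so $X\subseteq B$, $\sigma_x(y)=x\circ y - x$, $\tau_y(x)=\sigma_x(y)^{-1}\circ x\circ y$), and let $c\in B$ be central in $(B,\circ)$ (i.e. $c\circ x = x\circ c$ for all $x$) with $\tau_c(X)\subseteq X$. Then $k(x) := \tau_c(x)$ is $\tau$-equivariant, $k(\tau_y(x)) = \tau_y(k(x))$ for all $x,y$, and hence a reflection of $(X,\check r)$. -/

import Mathlib

structure LeftBrace (B : Type*) where
  add : B → B → B
  zero : B
  neg : B → B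
  mul : B → B → B
  one : B
  inv : B → B
  add_assoc : ∀ a b c, add (add a b) c = add a (add b c)
  zero_add : ∀ a, add zero a = a
  add_zero : ∀ a, add a zero = a
  neg_add : ∀ a, add (neg a) a = zero
  add_neg : ∀ a, add a (neg a) = zero
  mul_assoc : ∀ a b c, mul (mul a b) c = mul a (mul b c)
  one_mul : ∀ a, mul one a = a
  mul_one : ∀ a, mul a one = a
  inv_mul : ∀ a, mul (inv a) a = one
  mul_inv : ∀ a, mul a (inv a) = one
  add_comm : ∀ a b, add a b = add b a
  dist : ∀ a b c, mul a (add b c) = add (add (mul a b) (neg a)) (mul a c)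

section Dev
variable {B : Type*}

def Sy (_S : LeftBrace B) : Type _ := B

instance (S : LeftBrace B) : Zero (Sy S) := ⟨S.zero⟩
instance (S : LeftBrace B) : Add (Sy S) := ⟨S.add⟩
instance (S : LeftBrace B) : Neg (Sy S) := ⟨S.neg⟩
instance (S : LeftBrace B) : One (Sy S) := ⟨S.one⟩
instance (S : LeftBrace B) : Mul (Sy S) := ⟨S.mul⟩
instance (S : LeftBrace B) : Inv (Sy S) := ⟨S.inv⟩

instance (S : LeftBrace B) : AddCommGroup (Sy S) where
  add_assoc := S.add_assoc
  zero_add := S.zero_add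
  add_zero := S.add_zero
  neg_add_cancel := S.neg_add
  add_comm := S.add_comm
  nsmul := nsmulRec
  zsmul := zsmulRec

instance (S : LeftBrace B) : Group (Sy S) where
  mul_assoc := S.mul_assoc
  one_mul := S.one_mul
  mul_one := S.mul_one
  inv_mul_cancel := S.inv_mul

variable {S : LeftBrace B}

lemma dist' (a b c : Sy S) : a * (b + c) = a * b - a + a * c := by
  rw [sub_eq_add_neg]; exact S.dist a b c

lemma mul_zero' (a : Sy S) : a * (0 : Sy S) = a := by
  have h := dist' a (0 : Sy S) 0
  rw [add_zero] at h
  have h2 : a * (0:Sy S) + 0 = a * 0 + (a * 0 - a) := by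
    rw [add_zero]; rw (occs := .pos [1]) [h]; abel
  have h3 := add_left_cancel h2
  rw [eq_comm, sub_eq_zero] at h3
  exact h3

lemma zero_eq_one' : (0 : Sy S) = 1 := by
  have h1 : (1 : Sy S) * 0 = 0 := one_mul 0
  have h2 : (1 : Sy S) * 0 = 1 := mul_zero' 1
  rw [h1] at h2; exact h2

def lam (a x : Sy S) : Sy S := a * x - a

lemma mul_eq_lam (a x : Sy S) : a * x = lam a x + a := by
  unfold lam; abel

lemma mul_neg' (a b : Sy S) : a * (-b) = a + a - a * b := by
  have h := dist' a b (-b)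
  rw [add_neg_cancel, mul_zero'] at h
  -- a = a*b - a + a*(-b)
  have : a + a - a * b = (a * b - a + a * (-b)) + a - a * b := by rw [← h]
  rw [this]; abel

lemma lam_mul (a b x : Sy S) : lam a (lam b x) = lam (a * b) x := by
  unfold lam
  rw [sub_eq_add_neg (b*x) b, dist', mul_neg', ← mul_assoc]
  abel

def sig (x y : Sy S) : Sy S := lam x y
def tau (y x : Sy S) : Sy S := (lam x y)⁻¹ * (x * y)

lemma lam_inv_mul (g s : Sy S) : lam g (g⁻¹ * s) = s - g := by
  unfold lam; rw [mul_inv_cancel_left]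

lemma inv1 (x y : Sy S) : lam (sig x y) (tau y x) = x := by
  unfold sig tau
  rw [lam_inv_mul]; unfold lam; abel

lemma sig_mul_tau (x y : Sy S) : sig x y * tau y x = x * y := by
  unfold sig tau; rw [mul_inv_cancel_left]

lemma inv2 (x y : Sy S) : tau (tau y x) (sig x y) = y := by
  show (lam (sig x y) (tau y x))⁻¹ * (sig x y * tau y x) = y
  rw [inv1, sig_mul_tau, inv_mul_cancel_left]

lemma tau_eq (q w : Sy S) (v : Sy S) (h : tau q w = v) : w = (lam q v⁻¹)⁻¹ := by
  have hg : lam w q = (w * q) * v⁻¹ := by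
    rw [← h]; unfold tau
    rw [mul_inv_rev, inv_inv, ← mul_assoc, mul_inv_cancel, one_mul]
  have hw : w = -(lam w (lam q v⁻¹)) := by
    rw [lam_mul]
    have h1 : lam (w * q) v⁻¹ = (w*q) * v⁻¹ - w * q := rfl
    rw [h1, ← hg]
    unfold lam; abel
  have hmul : w * (lam q v⁻¹) = 1 := by
    rw [mul_eq_lam]
    have : lam w (lam q v⁻¹) = -w := by rw (occs := .pos [2]) [hw]; abel
    rw [this, ← zero_eq_one']; abel
  exact eq_inv_of_mul_eq_one_left hmul

lemma tau_inj (q : Sy S) {w₁ w₂ : Sy S} (h : tau q w₁ = tau q w₂) : w₁ = w₂ := by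
  rw [tau_eq q w₁ (tau q w₂) h, ← tau_eq q w₂ (tau q w₂) rfl]

section Central
variable {c : Sy S} (hc : ∀ x : Sy S, c * x = x * c)
include hc

lemma equiv (x y : Sy S) : tau c (tau y x) = tau y (tau c x) := by
  set g := lam x y with hgd
  set t := tau y x with htd
  set kx := tau c x with hkx
  set h := lam t c with hhd
  set m := lam x c with hmd
  set n := lam kx y with hnd
  have hgt : g * t = x * y := sig_mul_tau x y
  have hmk : m * kx = x * c := sig_mul_tau x c
  have ghx : g * h = (x * y) * c - x := by
    rw [mul_eq_lam g h, hhd, lam_mul, hgt, hgd]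
    unfold lam; abel
  have mnx : m * n = (x * c) * y - x := by
    rw [mul_eq_lam m n, hnd, lam_mul, hmk, hmd]
    unfold lam; abel
  have key : g * h = m * n := by
    rw [ghx, mnx, mul_assoc, mul_assoc, hc y]
  have e1 : t * c = g⁻¹ * (x * (y * c)) := by
    rw [htd]; show (g⁻¹ * (x*y)) * c = _ ; rw [mul_assoc, mul_assoc]
  have e2 : kx * y = m⁻¹ * (x * (c * y)) := by
    rw [hkx]; show (m⁻¹ * (x*c)) * y = _ ; rw [mul_assoc, mul_assoc]
  show (lam t c)⁻¹ * (t * c) = (lam kx y)⁻¹ * (kx * y)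
  rw [← hhd, ← hnd]
  calc h⁻¹ * (t * c) = (g * h)⁻¹ * (x * (y * c)) := by
        rw [e1, mul_inv_rev, mul_assoc]
    _ = (m * n)⁻¹ * (x * (c * y)) := by rw [key, hc y]
    _ = n⁻¹ * (kx * y) := by rw [e2, mul_inv_rev, mul_assoc]

lemma refl2 (x y : Sy S) :
    tau (tau c (tau y x)) (tau c (sig (tau c x) y)) = tau c y ∧
    tau (tau y x) (tau c (sig x y)) = tau c y := by
  constructor
  · have h1 : tau (tau y (tau c x)) (sig (tau c x) y) = y := inv2 (tau c x) y
    rw [← equiv hc] at h1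
    calc tau (tau c (tau y x)) (tau c (sig (tau c x) y))
        = tau c (tau (tau c (tau y x)) (sig (tau c x) y)) := (equiv hc _ _).symm
      _ = tau c y := by rw [h1]
  · have h1 : tau (tau y x) (sig x y) = y := inv2 x y
    calc tau (tau y x) (tau c (sig x y))
        = tau c (tau (tau y x) (sig x y)) := (equiv hc _ _).symm
      _ = tau c y := by rw [h1]

lemma refl1 (x y : Sy S) :
    sig (tau c (sig (tau c x) y)) (tau c (tau y x)) =
    tau c (sig (tau c (sig x y)) (tau y x)) := by
  obtain ⟨h2a, h2b⟩ := refl2 hc x y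
  apply tau_inj (tau c y)
  have lhs : tau (tau c y) (sig (tau c (sig (tau c x) y)) (tau c (tau y x))) = tau c (tau y x) := by
    have := inv2 (tau c (sig (tau c x) y)) (tau c (tau y x))
    rwa [h2a] at this
  have rhs : tau (tau c y) (tau c (sig (tau c (sig x y)) (tau y x))) = tau c (tau y x) := by
    have h4 : tau (tau c y) (sig (tau c (sig x y)) (tau y x)) = tau y x := by
      have := inv2 (tau c (sig x y)) (tau y x)
      rwa [h2b] at this
    calc tau (tau c y) (tau c (sig (tau c (sig x y)) (tau y x)))
        = tau c (tau (tau c y) (sig (tau c (sig x y)) (tau y x))) := (equiv hc _ _).symm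
      _ = tau c (tau y x) := by rw [h4]
  rw [lhs, rhs]

end Central
end Dev

theorem stmt19 (B : Type*) (S : LeftBrace B)
    (σ τ : B → B → B)
    (hσ : ∀ x y, σ x y = S.add (S.mul x y) (S.neg x))
    (hτ : ∀ y x, τ y x = S.mul (S.inv (σ x y)) (S.mul x y))
    (r : B × B → B × B) (hr : ∀ x y, r (x, y) = (σ x y, τ y x))
    (X : Set B) (c : B) (hc : ∀ x, S.mul c x = S.mul x c)
    (k : B → B) (hk : ∀ x, k x = τ c x)
    (hkX : ∀ x ∈ X, k x ∈ X)
    (K : B × B → B × B) (hK : ∀ x y, K (x, y) = (k x, y)) :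
    (∀ x y, k (τ y x) = τ y (k x)) ∧
    (∀ p, r (K (r (K p))) = K (r (K (r p)))) := by
  -- translate to the Sy S development
  have hσ' : ∀ x y : Sy S, σ x y = sig x y := by
    intro x y
    rw [hσ x y]
    show S.add (S.mul x y) (S.neg x) = x * y - x
    rw [sub_eq_add_neg]; rfl
  have hτ' : ∀ y x : Sy S, τ y x = tau y x := by
    intro y x
    rw [hτ y x, hσ' x y]
    rfl
  let c' : Sy S := c
  have hc' : ∀ x : Sy S, c' * x = x * c' := hc
  have hk' : ∀ x : Sy S, k x = tau c' x := by
    intro x; rw [hk x, hτ' c x]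
  constructor
  · intro (x : Sy S) (y : Sy S)
    rw [hk' (τ y x), hk' x, hτ' y x, hτ' y (tau c' x), equiv hc' x y]
  · rintro ⟨(x : Sy S), (y : Sy S)⟩
    rw [hK x y, hr (k x) y, hK (σ (k x) y) (τ y (k x)),
        hr (k (σ (k x) y)) (τ y (k x)),
        hr x y, hK (σ x y) (τ y x), hr (k (σ x y)) (τ y x),
        hK (σ (k (σ x y)) (τ y x)) (τ (τ y x) (k (σ x y)))]
    refine Prod.ext ?_ ?_
    · show σ (k (σ (k x) y)) (τ y (k x)) = k (σ (k (σ x y)) (τ y x))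
      simp only [hσ', hτ', hk']
      rw [← equiv hc' x y]
      exact refl1 hc' x y
    · show τ (τ y (k x)) (k (σ (k x) y)) = τ (τ y x) (k (σ x y))
      simp only [hσ', hτ', hk']
      rw [← equiv hc' x y]
      exact (refl2 hc' x y).1.trans (refl2 hc' x y).2.symm
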